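/- Let p ∈ [0,1] and let τ = (2p/3)·u u† + ((1−p)/8)·I₄ with u = (|00⟩+|11⟩)/√2 (the unnormalized localized noisy W state). Then the partial transpose τ^{T₂} is positive semidefinite if and only if p ≤ 3/11. -/

import Mathlib

open Matrix BigOperators ComplexOrder

noncomputable section

/-- The rank-one matrix `x x†`. -/
def rankOne {n : Type*} (x : n → ℂ) : Matrix n n ℂ :=
  Matrix.of fun i j => x i * (starRingEnd ℂ) (x j)

/-- The Bell vector `(|00⟩ + |11⟩)/√2`. -/
def uBell : Fin 2 × Fin 2 → ℂ := fun x =>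
  ((if x = (0, 0) then 1 else 0) + (if x = (1, 1) then 1 else 0)) / (Real.sqrt 2 : ℂ)

/-- Partial transpose on the second factor of a bipartite matrix. -/
def pt2 {a b : ℕ} (M : Matrix (Fin a × Fin b) (Fin a × Fin b) ℂ) :
    Matrix (Fin a × Fin b) (Fin a × Fin b) ℂ :=
  Matrix.of fun p q => M (p.1, q.2) (q.1, p.2)

lemma rankOne_hermitian {n : Type*} (x : n → ℂ) : (rankOne x).IsHermitian := by
  ext i j
  simp [rankOne, Matrix.conjTranspose_apply, mul_comm]

lemma rankOne_qform {n : Type*} [Fintype n] (x y : n → ℂ) :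
    star y ⬝ᵥ (rankOne x) *ᵥ y
      = (∑ i, star (y i) * x i) * star (∑ i, star (y i) * x i) := by
  have hs : star (∑ i, star (y i) * x i) = ∑ i, y i * star (x i) := by
    simp [star_sum, star_mul']
  rw [hs, Finset.sum_mul_sum]
  simp only [dotProduct, Matrix.mulVec, rankOne, Matrix.of_apply, Pi.star_apply,
    Finset.mul_sum, starRingEnd_apply]
  exact Finset.sum_congr rfl fun i _ => Finset.sum_congr rfl fun j _ => by ring

lemma rankOne_posSemidef {n : Type*} [Fintype n] (x : n → ℂ) : (rankOne x).PosSemidef := by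
  refine Matrix.PosSemidef.of_dotProduct_mulVec_nonneg (rankOne_hermitian x) fun y => ?_
  rw [rankOne_qform]
  exact mul_star_self_nonneg _

lemma smul_posSemidef {n : Type*} [Fintype n] {M : Matrix n n ℂ} (hM : M.PosSemidef)
    {r : ℝ} (hr : 0 ≤ r) : ((r : ℂ) • M).PosSemidef := by
  refine Matrix.PosSemidef.of_dotProduct_mulVec_nonneg ?_ fun y => ?_
  · ext i j
    simp [Matrix.conjTranspose_apply, hM.1.apply, Complex.conj_ofReal]
  · have := hM.dotProduct_mulVec_nonneg y
    calc (0:ℂ) ≤ (r:ℂ) * (star y ⬝ᵥ M *ᵥ y) := by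
          exact mul_nonneg (by exact_mod_cast Complex.zero_le_real.mpr hr) this
      _ = star y ⬝ᵥ ((r:ℂ) • M) *ᵥ y := by
          simp [Matrix.smul_mulVec, dotProduct_smul, smul_eq_mul]

def bvec (z : Fin 2 × Fin 2) : Fin 2 × Fin 2 → ℂ := fun y => if y = z then 1 else 0

def wvec : Fin 2 × Fin 2 → ℂ := fun y =>
  (if y = (0,1) then 1 else 0) + (if y = (1,0) then 1 else 0)

/-- For the unnormalized localized noisy W state `τ = (2p/3) u u† + ((1-p)/8) I₄`,
the partial transpose is positive semidefinite iff `p ≤ 3/11`. -/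
theorem pt_localized_noisy_w_posSemidef_iff (p : ℝ) (hp0 : 0 ≤ p) (hp1 : p ≤ 1)
    (τ : Matrix (Fin 2 × Fin 2) (Fin 2 × Fin 2) ℂ)
    (hτ : τ = ((2 * p / 3 : ℝ) : ℂ) • rankOne uBell + (((1 - p) / 8 : ℝ) : ℂ) • 1) :
    (pt2 τ).PosSemidef ↔ p ≤ 3 / 11 := by
  set a : ℝ := p / 3 + (1 - p) / 8 with ha
  set c : ℝ := (1 - p) / 8 - p / 3 with hc
  have h2 : ((Real.sqrt 2 : ℝ) : ℂ) * ((Real.sqrt 2 : ℝ) : ℂ) = 2 := by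
    rw [← Complex.ofReal_mul, Real.mul_self_sqrt (by norm_num)]
    norm_num
  have hM : pt2 τ = (a : ℂ) • rankOne (bvec (0,0)) + (a : ℂ) • rankOne (bvec (1,1))
      + (c : ℂ) • rankOne (bvec (0,1)) + (c : ℂ) • rankOne (bvec (1,0))
      + ((p / 3 : ℝ) : ℂ) • rankOne wvec := by
    subst hτ
    ext ⟨i, j⟩ ⟨k, l⟩
    fin_cases i <;> fin_cases j <;> fin_cases k <;> fin_cases l <;>
      · simp only [pt2, rankOne, uBell, bvec, wvec, Matrix.of_apply, Matrix.add_apply,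
          Matrix.smul_apply, Matrix.one_apply, Prod.mk.injEq, smul_eq_mul, map_div₀, map_add,
          _root_.map_one, map_zero, Complex.conj_ofReal, div_mul_div_comm, h2]
        norm_num [ha, hc]
        try push_cast
        try ring
  constructor
  · intro hpsd
    set v : Fin 2 × Fin 2 → ℂ :=
      fun y => (if y = (0,1) then 1 else 0) - (if y = (1,0) then 1 else 0) with hv
    have hq := hpsd.dotProduct_mulVec_nonneg v
    rw [hM] at hq
    simp only [Matrix.add_mulVec, Matrix.smul_mulVec, dotProduct_add,
      dotProduct_smul, rankOne_qform, smul_eq_mul] at hq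
    have e1 : (∑ i, star (v i) * bvec (0,0) i) = 0 := by
      simp [Fintype.sum_prod_type, Fin.sum_univ_two, hv, bvec, Prod.ext_iff]
    have e2 : (∑ i, star (v i) * bvec (1,1) i) = 0 := by
      simp [Fintype.sum_prod_type, Fin.sum_univ_two, hv, bvec, Prod.ext_iff]
    have e3 : (∑ i, star (v i) * bvec (0,1) i) = 1 := by
      simp [Fintype.sum_prod_type, Fin.sum_univ_two, hv, bvec, Prod.ext_iff]
    have e4 : (∑ i, star (v i) * bvec (1,0) i) = -1 := by
      simp [Fintype.sum_prod_type, Fin.sum_univ_two, hv, bvec, Prod.ext_iff]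
    have e5 : (∑ i, star (v i) * wvec i) = 0 := by
      simp [Fintype.sum_prod_type, Fin.sum_univ_two, hv, wvec, Prod.ext_iff]
    rw [e1, e2, e3, e4, e5] at hq
    simp only [star_zero, star_one, mul_zero, mul_one, zero_mul, add_zero, zero_add] at hq
    have hq' : (0:ℂ) ≤ ((2 * c : ℝ) : ℂ) := by
      convert hq using 1
      push_cast
      ring_nf
      simp
      ring
    have : (0:ℝ) ≤ 2 * c := by exact_mod_cast Complex.zero_le_real.mp hq'
    rw [hc] at this; linarith
  · intro hp
    rw [hM]
    have hc0 : 0 ≤ c := by rw [hc]; linarith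
    have ha0 : 0 ≤ a := by rw [ha]; linarith
    exact ((((smul_posSemidef (rankOne_posSemidef _) ha0).add
      (smul_posSemidef (rankOne_posSemidef _) ha0)).add
      (smul_posSemidef (rankOne_posSemidef _) hc0)).add
      (smul_posSemidef (rankOne_posSemidef _) hc0)).add
      (smul_posSemidef (rankOne_posSemidef _) (by linarith : (0:ℝ) ≤ p / 3))
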